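/- Let ω be a factor of the period-doubling sequence D, let E = Env(ω), and let E = μ_1 ω μ_2 be the factorization given by the unique occurrence of ω in E. Then for every p ≥ 1 the p-th occurrence of E in D contains the p-th occurrence of ω with the same offset: L(ω,p) = L(E,p) + |μ_1|; equivalently, Env(ω_p) = Env(ω)_p for all p ≥ 1. -/

import Mathlib

/-- The alphabet: letters a, b (for the period-doubling sequence) and c (used by Θ₂). -/
inductive Letter : Type
  | a | b | c
deriving DecidableEq, Repr

open Letter

/-- The period-doubling substitution σ : a ↦ ab, b ↦ aa, extended to words
(the extra letter c is left untouched; it is never produced). -/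
def sigmaw : List Letter → List Letter :=
  fun w => w.flatMap fun x => match x with
    | .a => [.a, .b]
    | .b => [.a, .a]
    | .c => [.c]

/-- A_m = σ^m(a). -/
def A (m : ℕ) : List Letter := sigmaw^[m] [.a]

/-- B_m = σ^m(b). -/
def B (m : ℕ) : List Letter := sigmaw^[m] [.b]

/-- δ_m, the last letter of A_m. -/
def delta (m : ℕ) : Letter := (A m).getLastD .a

/-- The period-doubling sequence D, as a function giving its (n+1)-st letter
(0-indexed); it is the fixed point of σ beginning with a, and A_{n+1} is a
prefix of it of length 2^{n+1} > n. -/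
def D (n : ℕ) : Letter := (A (n + 1)).getD n .a

/-- The finite segment D[i .. i+len−1] of the period-doubling sequence,
with 1-based starting position i. -/
def Dseg (i len : ℕ) : List Letter := (List.range len).map fun k => D (i - 1 + k)

/-- u occurs in the finite word w at (1-based) position i. -/
def OccursAt {α : Type*} (u w : List α) (i : ℕ) : Prop :=
  1 ≤ i ∧ i - 1 + u.length ≤ w.length ∧ (w.drop (i - 1)).take u.length = u

/-- u is a factor of the finite word w. -/
def IsFactor {α : Type*} (u w : List α) : Prop := ∃ i, OccursAt u w i

/-- u occurs in the period-doubling sequence D at (1-based) position i. -/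
def DOccursAt (u : List Letter) (i : ℕ) : Prop := 1 ≤ i ∧ Dseg i u.length = u

/-- u is a factor of the period-doubling sequence D. -/
def FactorD (u : List Letter) : Prop := ∃ i, DOccursAt u i

/-- L(u,p): the starting position of the p-th occurrence (p ≥ 1) of u in D. -/
noncomputable def L (u : List Letter) (p : ℕ) : ℕ := Nat.nth (DOccursAt u) (p - 1)

/-- r_p(u): the p-th return word of u (p ≥ 1), i.e. D[L(u,p) .. L(u,p+1)−1];
r_0(u) is the prefix of D preceding the first occurrence of u. -/
noncomputable def r (u : List Letter) (p : ℕ) : List Letter :=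
  if p = 0 then Dseg 1 (L u 1 - 1) else Dseg (L u p) (L u (p + 1) - L u p)

/-- The morphism τ₁ : a ↦ a, b ↦ bb, extended to words. -/
def tau1 : List Letter → List Letter :=
  fun w => w.flatMap fun x => match x with
    | .a => [.a]
    | .b => [.b, .b]
    | .c => [.c]

/-- The morphism τ₂ : a ↦ ab, b ↦ acac, extended to words. -/
def tau2 : List Letter → List Letter :=
  fun w => w.flatMap fun x => match x with
    | .a => [.a, .b]
    | .b => [.a, .c, .a, .c]
    | .c => [.c]

/-- Θ₁[p], the p-th letter (p ≥ 1) of Θ₁ = τ₁(D): since |τ₁(w)| ≥ |w|, the p-th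
letter of Θ₁ is the p-th letter of the image of the length-p prefix of D. -/
def Theta1 (p : ℕ) : Letter := (tau1 (Dseg 1 p)).getD (p - 1) .a

/-- Θ₂[p], the p-th letter (p ≥ 1) of Θ₂ = τ₂(D). -/
def Theta2 (p : ℕ) : Letter := (tau2 (Dseg 1 p)).getD (p - 1) .a

/-- The envelope word E_{1,m} = A_m with its last letter δ_m deleted. -/
def E1 (m : ℕ) : List Letter := (A m).dropLast

/-- The envelope word E_{2,m} = B_m B_{m−1} with its last letter δ_m deleted. -/
def E2 (m : ℕ) : List Letter := (B m ++ B (m - 1)).dropLast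

/-- Enumeration of the envelope words in the order
E_{1,1} ⊏ E_{2,1} ⊏ E_{1,2} ⊏ E_{2,2} ⊏ …. -/
def Eword (k : ℕ) : List Letter := if k % 2 = 0 then E1 (k / 2 + 1) else E2 (k / 2 + 1)

/-- Env(u): the ⊏-least envelope word having u as a factor. -/
noncomputable def Env (u : List Letter) : List Letter :=
  Eword (sInf {k | IsFactor u (Eword k)})

/-- The letterwise complement exchanging a and b. -/
def comp : Letter → Letter
  | .a => .b
  | .b => .a
  | .c => .c

namespace PD
open Letter List

/-! ### Basic word facts -/

lemma sigmaw_append (u v : List Letter) : sigmaw (u ++ v) = sigmaw u ++ sigmaw v := by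
  simp [sigmaw]

lemma sigmaw_cons (x : Letter) (t : List Letter) :
    sigmaw (x :: t) = sigmaw [x] ++ sigmaw t := by simp [sigmaw]

lemma sigmaw_a : sigmaw [Letter.a] = [Letter.a, Letter.b] := rfl
lemma sigmaw_b : sigmaw [Letter.b] = [Letter.a, Letter.a] := rfl

lemma A_succ (m : ℕ) : A (m + 1) = sigmaw (A m) := by
  simp [A, Function.iterate_succ_apply']

lemma B_succ (m : ℕ) : B (m + 1) = sigmaw (B m) := by
  simp [B, Function.iterate_succ_apply']

lemma A_zero : A 0 = [.a] := rfl
lemma B_zero : B 0 = [.b] := rfl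
lemma A_one : A 1 = [.a, .b] := rfl
lemma B_one : B 1 = [.a, .a] := rfl

lemma A_succ' (m : ℕ) : A (m + 1) = A m ++ B m := by
  induction m with
  | zero => rfl
  | succ m ih =>
    calc A (m + 2) = sigmaw (A (m + 1)) := A_succ (m + 1)
    _ = sigmaw (A m ++ B m) := by rw [ih]
    _ = sigmaw (A m) ++ sigmaw (B m) := sigmaw_append _ _
    _ = A (m + 1) ++ B (m + 1) := by rw [A_succ, B_succ]

lemma B_succ' (m : ℕ) : B (m + 1) = A m ++ A m := by
  induction m with
  | zero => rfl
  | succ m ih =>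
    calc B (m + 2) = sigmaw (B (m + 1)) := B_succ (m + 1)
    _ = sigmaw (A m ++ A m) := by rw [ih]
    _ = sigmaw (A m) ++ sigmaw (A m) := sigmaw_append _ _
    _ = A (m + 1) ++ A (m + 1) := by rw [A_succ]

lemma length_AB (m : ℕ) : (A m).length = 2 ^ m ∧ (B m).length = 2 ^ m := by
  induction m with
  | zero => exact ⟨rfl, rfl⟩
  | succ m ih =>
    rw [A_succ', B_succ']
    simp only [List.length_append, ih.1, ih.2, pow_succ]
    omega

lemma length_A (m : ℕ) : (A m).length = 2 ^ m := (length_AB m).1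
lemma length_B (m : ℕ) : (B m).length = 2 ^ m := (length_AB m).2

/-- words over {a,b} -/
def ABW (w : List Letter) : Prop := ∀ x ∈ w, x = Letter.a ∨ x = Letter.b

lemma ABW_append {u v : List Letter} (hu : ABW u) (hv : ABW v) : ABW (u ++ v) := by
  intro x hx; rcases List.mem_append.1 hx with h | h; exacts [hu x h, hv x h]

lemma ABW_A (m : ℕ) : ABW (A m) ∧ ABW (B m) := by
  induction m with
  | zero =>
    constructor <;> · intro x hx; simp [A_zero, B_zero] at hx; simp [hx]
  | succ m ih => rw [A_succ', B_succ']; exact ⟨ABW_append ih.1 ih.2, ABW_append ih.1 ih.1⟩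

lemma length_sigmaw {u : List Letter} (hu : ABW u) : (sigmaw u).length = 2 * u.length := by
  induction u with
  | nil => rfl
  | cons x t ih =>
    have ht : ABW t := fun y hy => hu y (by simp [hy])
    rw [sigmaw_cons, List.length_append, ih ht]
    rcases hu x (by simp) with h | h <;> subst h <;> simp [sigmaw_a, sigmaw_b] <;> ring

lemma getD_sigmaw_even {u : List Letter} (hu : ABW u) {q : ℕ} (hq : q < u.length) :
    (sigmaw u).getD (2 * q) Letter.a = Letter.a := by
  induction u generalizing q with
  | nil => simp at hq
  | cons x t ih =>
    have ht : ABW t := fun y hy => hu y (by simp [hy])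
    rw [sigmaw_cons]
    match q with
    | 0 => rcases hu x (by simp) with h | h <;> subst h <;> rfl
    | q + 1 =>
      have hq' : q < t.length := by simpa using hq
      have h2 : 2 * (q + 1) = 2 * q + 1 + 1 := by ring
      rcases hu x (by simp) with h | h <;> subst h <;>
        · simp only [sigmaw_a, sigmaw_b, List.cons_append, List.nil_append, h2,
            List.getD_cons_succ]
          exact ih ht hq'


lemma getD_sigmaw_odd {u : List Letter} (hu : ABW u) {q : ℕ} (hq : q < u.length) :
    (sigmaw u).getD (2 * q + 1) Letter.a = comp (u.getD q Letter.a) := by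
  induction u generalizing q with
  | nil => simp at hq
  | cons x t ih =>
    have ht : ABW t := fun y hy => hu y (by simp [hy])
    rw [sigmaw_cons]
    match q with
    | 0 => rcases hu x (by simp) with h | h <;> subst h <;> rfl
    | q + 1 =>
      have hq' : q < t.length := by simpa using hq
      have h2 : 2 * (q + 1) + 1 = (2 * q + 1) + 1 + 1 := by ring
      rcases hu x (by simp) with h | h <;> subst h <;>
        · simp only [sigmaw_a, sigmaw_b, List.cons_append, List.nil_append, h2,
            List.getD_cons_succ]
          exact ih ht hq'


/-! ### Facts about the sequence D -/

lemma comp_comp (x : Letter) : comp (comp x) = x := by cases x <;> rfl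

lemma comp_inj {x y : Letter} (h : comp x = comp y) : x = y := by
  have := congrArg comp h; rwa [comp_comp, comp_comp] at this

lemma A_prefix (m k : ℕ) : ∃ t, A (m + k) = A m ++ t := by
  induction k with
  | zero => exact ⟨[], by simp⟩
  | succ k ih =>
    obtain ⟨t, ht⟩ := ih
    exact ⟨t ++ B (m + k), by rw [← Nat.add_assoc, A_succ' (m + k), ht, List.append_assoc]⟩

lemma lt_two_pow_succ (n : ℕ) : n < 2 ^ (n + 1) :=
  lt_of_lt_of_le (Nat.lt_two_pow_self (n := n)) (Nat.pow_le_pow_right (by norm_num) (Nat.le_succ n))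

lemma Dval {m n : ℕ} (h : n < 2 ^ m) : (A m).getD n Letter.a = D n := by
  have key : ∀ m₁ m₂ n, m₁ ≤ m₂ → n < 2 ^ m₁ → (A m₁).getD n .a = (A m₂).getD n .a := by
    intro m₁ m₂ n hle hn
    obtain ⟨k, rfl⟩ := Nat.exists_eq_add_of_le hle
    obtain ⟨t, ht⟩ := A_prefix m₁ k
    rw [ht, List.getD_append _ _ _ _ (by rw [length_A]; exact hn)]
  rcases Nat.le_total m (n + 1) with hle | hle
  · exact (key m (n + 1) n hle h).trans rfl
  · exact (key (n + 1) m n hle (lt_two_pow_succ n)).symm.trans rfl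

lemma R1 (t : ℕ) : D (2 * t) = Letter.a := by
  have h1 : t < 2 ^ t := Nat.lt_two_pow_self (n := t)
  have h2 : 2 * t < 2 ^ (t + 1) := by rw [pow_succ]; omega
  rw [← Dval h2, A_succ, getD_sigmaw_even (ABW_A t).1 (by rw [length_A]; exact h1)]

lemma R2 (t : ℕ) : D (2 * t + 1) = comp (D t) := by
  have h1 : t < 2 ^ t := Nat.lt_two_pow_self (n := t)
  have h2 : 2 * t + 1 < 2 ^ (t + 1) := by rw [pow_succ]; omega
  rw [← Dval h2, A_succ, getD_sigmaw_odd (ABW_A t).1 (by rw [length_A]; exact h1),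
    Dval h1]

lemma Dab (n : ℕ) : D n = Letter.a ∨ D n = Letter.b := by
  have h : n < (A (n + 1)).length := by rw [length_A]; exact lt_two_pow_succ n
  have heq : D n = (A (n + 1))[n] := by
    show (A (n+1)).getD n .a = _
    rw [List.getD_eq_getElem _ _ h]
  rw [heq]
  exact (ABW_A (n + 1)).1 _ (List.getElem_mem h)

lemma D0 : D 0 = Letter.a := R1 0
lemma D1 : D 1 = Letter.b := by have := R2 0; rwa [D0] at this
lemma D2 : D 2 = Letter.a := R1 1
lemma D3 : D 3 = Letter.a := by have := R2 1; rwa [D1] at this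
lemma D4 : D 4 = Letter.a := R1 2

lemma compa : comp Letter.a = Letter.b := rfl
lemma compb : comp Letter.b = Letter.a := rfl

lemma blockend (e t : ℕ) : D (2 ^ e * t + (2 ^ e - 1)) = comp^[e] (D t) := by
  induction e generalizing t with
  | zero => simp
  | succ e ih =>
    have h1 : (1:ℕ) ≤ 2 ^ e := Nat.one_le_two_pow
    have h2 : 2 ^ (e+1) * t + (2 ^ (e+1) - 1) = 2 * (2 ^ e * t + (2 ^ e - 1)) + 1 := by
      have e1 : 2 ^ (e+1) = 2 * 2 ^ e := by ring
      rw [e1, Nat.mul_assoc]; omega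
    rw [h2, R2, ih, Function.iterate_succ_apply']

lemma NoBB (t : ℕ) : ¬(D t = Letter.b ∧ D (t + 1) = Letter.b) := by
  rintro ⟨h1, h2⟩
  rcases Nat.even_or_odd t with ⟨s, hs⟩ | ⟨s, hs⟩
  · rw [hs, ← two_mul, R1] at h1; exact absurd h1 (by simp)
  · have : t + 1 = 2 * (s + 1) := by omega
    rw [this, R1] at h2; exact absurd h2 (by simp)

lemma b_iff {s : ℕ} : D s = Letter.b ↔ ∃ u, D u = Letter.a ∧ s = 2 * u + 1 := by
  constructor
  · intro h
    rcases Nat.even_or_odd s with ⟨u, hu⟩ | ⟨u, hu⟩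
    · rw [hu, ← two_mul, R1] at h; exact absurd h (by simp)
    · have hs : s = 2 * u + 1 := by omega
      rw [hs, R2] at h
      rcases Dab u with ha | hb
      · exact ⟨u, ha, hs⟩
      · rw [hb, compb] at h; exact absurd h (by simp)
  · rintro ⟨u, hu, rfl⟩; rw [R2, hu, compa]

lemma aa_iff {s : ℕ} : (D s = Letter.a ∧ D (s + 1) = Letter.a) ↔
    ∃ t r, D t = Letter.a ∧ r < 2 ∧ s = 4 * t + 2 + r := by
  constructor
  · rintro ⟨h1, h2⟩
    obtain ⟨k, j, hj, rfl⟩ : ∃ k j, j < 4 ∧ s = 4 * k + j :=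
      ⟨s / 4, s % 4, Nat.mod_lt _ (by norm_num), by omega⟩
    interval_cases j
    · exfalso
      have : (4 * k + 0) + 1 = 2 * (2 * k) + 1 := by ring
      rw [this, R2, R1, compa] at h2; exact absurd h2 (by simp)
    · exfalso
      have : (4 * k + 1) = 2 * (2 * k) + 1 := by ring
      rw [this, R2, R1, compa] at h1; exact absurd h1 (by simp)
    · refine ⟨k, 0, ?_, by norm_num, by ring⟩
      have h3 : (4 * k + 2) + 1 = 2 * (2 * k + 1) + 1 := by ring
      rw [h3, R2, R2, comp_comp] at h2; exact h2
    · refine ⟨k, 1, ?_, by norm_num, by ring⟩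
      have h3 : (4 * k + 3) = 2 * (2 * k + 1) + 1 := by ring
      rw [h3, R2, R2, comp_comp] at h1; exact h1
  · rintro ⟨t, r, ht, hr, rfl⟩
    interval_cases r
    · constructor
      · have : 4 * t + 2 = 2 * (2 * t + 1) := by ring
        rw [this, R1]
      · have : (4 * t + 2) + 1 = 2 * (2 * t + 1) + 1 := by ring
        rw [this, R2, R2, comp_comp]; exact ht
    · constructor
      · have : 4 * t + 2 + 1 = 2 * (2 * t + 1) + 1 := by ring
        rw [this, R2, R2, comp_comp]; exact ht
      · have : (4 * t + 2 + 1) + 1 = 2 * (2 * (t + 1)) := by ring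
        rw [this, R1]

/-- No shift-invariance: for every positive shift there are mismatches in both directions. -/
lemma NS : ∀ d, 1 ≤ d →
    (∃ t, D t = Letter.a ∧ D (t + d) = Letter.b) ∧
    (∃ t, D t = Letter.b ∧ D (t + d) = Letter.a) := by
  intro d
  induction d using Nat.strong_induction_on with
  | _ d ih =>
    intro hd
    rcases Nat.even_or_odd d with ⟨d', hd'⟩ | ⟨k, hk⟩
    · -- d = 2 d', d' ≥ 1
      have hd'1 : 1 ≤ d' := by omega
      have hlt : d' < d := by omega
      obtain ⟨⟨u1, hu1a, hu1b⟩, ⟨u2, hu2b, hu2a⟩⟩ := ih d' hlt hd'1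
      constructor
      · refine ⟨2 * u2 + 1, ?_, ?_⟩
        · rw [R2, hu2b, compb]
        · have : 2 * u2 + 1 + d = 2 * (u2 + d') + 1 := by omega
          rw [this, R2, hu2a, compa]
      · refine ⟨2 * u1 + 1, ?_, ?_⟩
        · rw [R2, hu1a, compa]
        · have : 2 * u1 + 1 + d = 2 * (u1 + d') + 1 := by omega
          rw [this, R2, hu1b, compb]
    · -- d odd
      constructor
      · refine ⟨3 * d + 1, ?_, ?_⟩
        · have : 3 * d + 1 = 2 * (3 * k + 2) := by omega
          rw [this, R1]
        · have : 3 * d + 1 + d = 2 * (2 * d) + 1 := by omega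
          rw [this, R2, R1, compa]
      · refine ⟨1, D1, ?_⟩
        have : 1 + d = 2 * (k + 1) := by omega
        rw [this, R1]


/-! ### Occurrences in D (0-indexed) -/

def dOcc (u : List Letter) (j : ℕ) : Prop := ∀ l < u.length, D (j + l) = u.getD l Letter.a

lemma dOcc_nil (j : ℕ) : dOcc [] j := by intro l hl; simp at hl

lemma dOcc_cons {y : Letter} {u : List Letter} {j : ℕ} :
    dOcc (y :: u) j ↔ D j = y ∧ dOcc u (j + 1) := by
  constructor
  · intro h
    refine ⟨by simpa using h 0 (by simp), fun l hl => ?_⟩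
    have := h (l + 1) (by simpa using hl)
    simpa [Nat.add_assoc, Nat.add_comm 1 l] using this
  · rintro ⟨h0, h1⟩ l hl
    match l with
    | 0 => simpa using h0
    | l + 1 =>
      have := h1 l (by simpa using hl)
      simpa [Nat.add_assoc, Nat.add_comm 1 l] using this

lemma dOcc_ABW {u : List Letter} {j : ℕ} (h : dOcc u j) : ABW u := by
  intro x hx
  obtain ⟨l, hl, rfl⟩ := List.getElem_of_mem hx
  have := h l hl
  rw [List.getD_eq_getElem _ _ hl] at this
  rw [← this]
  exact Dab _

/-- The key desubstitution ("lifting") lemma. -/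
lemma lifting {u : List Letter} (hu : ABW u) (hne : u ≠ []) (i : ℕ) :
    dOcc (sigmaw u ++ [Letter.a]) i ↔ ∃ j, dOcc u j ∧ i = 2 * j := by
  set n := u.length with hn
  have hn1 : 1 ≤ n := List.length_pos_iff.2 hne
  have hlen : (sigmaw u).length = 2 * n := length_sigmaw hu
  have hW : ∀ q ≤ n, (sigmaw u ++ [Letter.a]).getD (2 * q) Letter.a = Letter.a := by
    intro q hq
    rcases Nat.lt_or_ge q n with h | h
    · rw [List.getD_append _ _ _ _ (by omega)]
      exact getD_sigmaw_even hu h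
    · have hqn : q = n := le_antisymm hq h
      subst hqn
      rw [List.getD_append_right _ _ _ _ (by omega)]
      simp [hlen]
  have hW2 : ∀ q < n, (sigmaw u ++ [Letter.a]).getD (2 * q + 1) Letter.a
      = comp (u.getD q Letter.a) := by
    intro q hq
    rw [List.getD_append _ _ _ _ (by omega)]
    exact getD_sigmaw_odd hu hq
  have hlen2 : (sigmaw u ++ [Letter.a]).length = 2 * n + 1 := by simp [hlen]
  constructor
  · intro h
    rcases Nat.even_or_odd i with ⟨j, hj⟩ | ⟨s, hs⟩
    · -- i = 2 j
      refine ⟨j, fun q hq => ?_, by omega⟩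
      have h1 := h (2 * q + 1) (by omega)
      rw [hW2 q hq] at h1
      have h2 : i + (2 * q + 1) = 2 * (j + q) + 1 := by omega
      rw [h2, R2] at h1
      exact comp_inj h1
    · -- i = 2 s + 1 : contradiction
      exfalso
      subst hs
      by_cases hA : ∃ q, q < n ∧ u.getD q Letter.a = Letter.a
      · obtain ⟨q, hq, ha⟩ := hA
        have h1 := h (2 * q + 1) (by omega)
        rw [hW2 q hq, ha, compa] at h1
        have h2 : 2 * s + 1 + (2 * q + 1) = 2 * (s + q + 1) := by omega
        rw [h2, R1] at h1
        exact absurd h1 (by simp)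
      · -- choose an absolute position ≡ 1 (mod 4) among i, i+2
        push_neg at hA
        have hb : ∀ q, q < n → u.getD q Letter.a = Letter.b := by
          intro q hq
          rcases Nat.lt_or_ge q n with h' | h'
          · have hmem : u.getD q Letter.a ∈ u := by
              rw [List.getD_eq_getElem _ _ h']
              exact List.getElem_mem h'
            rcases hu _ hmem with h'' | h''
            · exact absurd h'' (hA q hq)
            · exact h''
          · omega
        rcases Nat.even_or_odd s with ⟨v, hv⟩ | ⟨v, hv⟩
        · -- i = 4v + 1
          have h1 := h 0 (by omega)
          have hW0 := hW 0 (by omega)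
          rw [Nat.mul_zero] at hW0
          rw [hW0, Nat.add_zero] at h1
          have h2 : 2 * s + 1 = 2 * (2 * v) + 1 := by omega
          rw [h2, R2, R1, compa] at h1
          exact absurd h1 (by simp)
        · -- i = 4v + 3, use position i + 2 = 4(v+1) + 1
          have h1 := h 2 (by omega)
          have hW1 := hW 1 (by omega)
          rw [Nat.mul_one] at hW1
          rw [hW1] at h1
          have h2 : 2 * s + 1 + 2 = 2 * (2 * (v + 1)) + 1 := by omega
          rw [h2, R2, R1, compa] at h1
          exact absurd h1 (by simp)
  · rintro ⟨j, hj, rfl⟩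
    intro l hl
    rw [hlen2] at hl
    rcases Nat.even_or_odd l with ⟨q, hq⟩ | ⟨q, hq⟩
    · have hl' : l = 2 * q := by omega
      subst hl'
      rw [hW q (by omega)]
      have : 2 * j + 2 * q = 2 * (j + q) := by ring
      rw [this, R1]
    · have hl' : l = 2 * q + 1 := by omega
      subst hl'
      rw [hW2 q (by omega)]
      have : 2 * j + (2 * q + 1) = 2 * (j + q) + 1 := by ring
      rw [this, R2]
      exact congrArg comp (hj q (by omega))

/-! ### Envelope words: structure and occurrence formulas -/

lemma E1_one : E1 1 = [Letter.a] := rfl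
lemma E2_one : E2 1 = [Letter.a, Letter.a] := rfl

lemma ABW_dropLast {w : List Letter} (h : ABW w) : ABW w.dropLast :=
  fun x hx => h x (List.dropLast_subset w hx)

lemma ABW_E1 (m : ℕ) : ABW (E1 m) := ABW_dropLast (ABW_A m).1
lemma ABW_E2 (m : ℕ) : ABW (E2 m) := ABW_dropLast (ABW_append (ABW_A m).2 (ABW_A (m-1)).2)

lemma length_E1 (m : ℕ) : (E1 m).length = 2 ^ m - 1 := by
  simp [E1, length_A]

lemma length_E2 (e : ℕ) : (E2 (e + 1)).length = 2 ^ (e + 1) + 2 ^ e - 1 := by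
  simp [E2, length_B]

lemma E1_ne_nil (e : ℕ) : E1 (e + 1) ≠ [] := by
  intro h
  have h1 := length_E1 (e + 1)
  rw [h, List.length_nil, pow_succ] at h1
  have h2 : (1:ℕ) ≤ 2 ^ e := Nat.one_le_two_pow
  omega

lemma E2_ne_nil (e : ℕ) : E2 (e + 1) ≠ [] := by
  intro h
  have h1 := length_E2 e
  rw [h, List.length_nil, pow_succ] at h1
  have h2 : (1:ℕ) ≤ 2 ^ e := Nat.one_le_two_pow
  omega

lemma dropLast_sigmaw {w : List Letter} (hw : ABW w) (hne : w ≠ []) :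
    (sigmaw w).dropLast = sigmaw w.dropLast ++ [Letter.a] := by
  induction w with
  | nil => exact absurd rfl hne
  | cons x t ih =>
    cases t with
    | nil => rcases hw x (by simp) with h | h <;> subst h <;> rfl
    | cons y t' =>
      have habw : ABW (y :: t') := fun z hz => hw z (by simp [List.mem_cons] at hz ⊢; tauto)
      have hσne : sigmaw (y :: t') ≠ [] := by
        intro h
        have := length_sigmaw habw
        rw [h] at this
        simp at this
      rw [sigmaw_cons x (y :: t'), List.dropLast_append_of_ne_nil hσne,
        ih habw (by simp),
        show (x :: y :: t').dropLast = x :: (y :: t').dropLast from rfl,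
        sigmaw_cons x ((y :: t').dropLast), List.append_assoc]

lemma A_ne_nil (m : ℕ) : A m ≠ [] := by
  intro h
  have h1 := length_A m
  rw [h, List.length_nil] at h1
  have h2 : (1:ℕ) ≤ 2 ^ m := Nat.one_le_two_pow
  omega

lemma E1_succ (m : ℕ) : E1 (m + 1) = sigmaw (E1 m) ++ [Letter.a] := by
  rw [E1, A_succ, dropLast_sigmaw (ABW_A m).1 (A_ne_nil m), ← E1]

lemma E2_succ (m : ℕ) : E2 (m + 2) = sigmaw (E2 (m + 1)) ++ [Letter.a] := by
  have habw : ABW (B (m + 1) ++ B m) := ABW_append (ABW_A (m+1)).2 (ABW_A m).2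
  have hne : B (m + 1) ++ B m ≠ [] := by
    intro h
    have h1 := congrArg List.length h
    rw [List.length_append, length_B, List.length_nil] at h1
    have h2 : (1:ℕ) ≤ 2 ^ (m+1) := Nat.one_le_two_pow
    omega
  have h1 : E2 (m + 2) = (sigmaw (B (m + 1) ++ B m)).dropLast := by
    show (B (m+2) ++ B (m + 2 - 1)).dropLast = _
    have h2 : m + 2 - 1 = m + 1 := by omega
    rw [h2, B_succ (m+1), B_succ m, ← sigmaw_append]
  rw [h1, dropLast_sigmaw habw hne]
  have h3 : E2 (m + 1) = (B (m + 1) ++ B m).dropLast := by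
    show (B (m+1) ++ B (m + 1 - 1)).dropLast = _
    norm_num
  rw [h3]

lemma occE1 (e : ℕ) : ∀ i, dOcc (E1 (e + 1)) i ↔ ∃ t, D t = Letter.a ∧ i = 2 ^ e * t := by
  induction e with
  | zero =>
    intro i
    rw [E1_one]
    constructor
    · intro h
      exact ⟨i, by simpa using (dOcc_cons.1 h).1, by simp⟩
    · rintro ⟨t, ht, rfl⟩
      rw [dOcc_cons]
      exact ⟨by simpa using ht, dOcc_nil _⟩
  | succ e ih =>
    intro i
    rw [E1_succ (e + 1), lifting (ABW_E1 (e+1)) (E1_ne_nil e)]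
    constructor
    · rintro ⟨j, hj, rfl⟩
      obtain ⟨t, ht, rfl⟩ := (ih j).1 hj
      exact ⟨t, ht, by rw [pow_succ]; ring⟩
    · rintro ⟨t, ht, rfl⟩
      exact ⟨2 ^ e * t, (ih _).2 ⟨t, ht, rfl⟩, by rw [pow_succ]; ring⟩

lemma occE2 (e : ℕ) : ∀ i, dOcc (E2 (e + 1)) i ↔
    ∃ t r, D t = Letter.a ∧ r < 2 ∧ i = 2 ^ (e + 2) * t + 2 ^ (e + 1) + r * 2 ^ e := by
  induction e with
  | zero =>
    intro i
    have aa2 : dOcc (E2 1) i ↔ (D i = Letter.a ∧ D (i+1) = Letter.a) := by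
      rw [E2_one, dOcc_cons, dOcc_cons]
      constructor
      · rintro ⟨h1, h2, _⟩; exact ⟨h1, h2⟩
      · rintro ⟨h1, h2⟩; exact ⟨h1, h2, dOcc_nil _⟩
    rw [aa2, aa_iff]
    constructor
    · rintro ⟨t, r, ht, hr, rfl⟩; exact ⟨t, r, ht, hr, by norm_num⟩
    · rintro ⟨t, r, ht, hr, rfl⟩; exact ⟨t, r, ht, hr, by norm_num⟩
  | succ e ih =>
    intro i
    rw [E2_succ e, lifting (ABW_E2 (e+1)) (E2_ne_nil e)]
    constructor
    · rintro ⟨j, hj, rfl⟩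
      obtain ⟨t, r, ht, hr, rfl⟩ := (ih j).1 hj
      exact ⟨t, r, ht, hr, by rw [pow_succ 2 (e+2), pow_succ 2 (e+1), pow_succ 2 e]; ring⟩
    · rintro ⟨t, r, ht, hr, rfl⟩
      refine ⟨2 ^ (e + 2) * t + 2 ^ (e + 1) + r * 2 ^ e, (ih _).2 ⟨t, r, ht, hr, rfl⟩, ?_⟩
      rw [pow_succ 2 (e+2), pow_succ 2 (e+1), pow_succ 2 e]; ring

lemma Eword_even (e : ℕ) : Eword (2 * e) = E1 (e + 1) := by
  simp [Eword, Nat.mul_mod_right, Nat.mul_div_cancel_left _ (show 0 < 2 by norm_num)]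

lemma Eword_odd (e : ℕ) : Eword (2 * e + 1) = E2 (e + 1) := by
  have h1 : (2 * e + 1) % 2 = 1 := by omega
  have h2 : (2 * e + 1) / 2 = e := by omega
  simp [Eword, h1, h2]

/-! ### Occurrences within finite words -/

def fOcc (u w : List Letter) (q : ℕ) : Prop :=
  q + u.length ≤ w.length ∧ ∀ l < u.length, w.getD (q + l) Letter.a = u.getD l Letter.a

lemma fOcc_of_dOcc {u w : List Letter} {j q : ℕ} (hw : dOcc w j) (hu : dOcc u (j + q))
    (hlen : q + u.length ≤ w.length) : fOcc u w q := by
  refine ⟨hlen, fun l hl => ?_⟩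
  have h1 := hw (q + l) (by omega)
  have h2 := hu l hl
  rw [← Nat.add_assoc] at h1
  rw [← h1, ← h2]

lemma dOcc_of_fOcc {u w : List Letter} {j q : ℕ} (hf : fOcc u w q) (hw : dOcc w j) :
    dOcc u (j + q) := by
  obtain ⟨hlen, hlet⟩ := hf
  intro l hl
  have h1 := hw (q + l) (by omega)
  rw [Nat.add_assoc]
  rw [h1, hlet l hl]

lemma fOcc_cons_tail {y : Letter} {u w : List Letter} {q : ℕ} (h : fOcc (y :: u) w q) :
    fOcc u w (q + 1) := by
  obtain ⟨hlen, hlet⟩ := h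
  refine ⟨by simp at hlen; omega, fun l hl => ?_⟩
  have h2 := hlet (l + 1) (by simpa using hl)
  rw [show q + 1 + l = q + (l + 1) from by omega]
  simpa using h2

lemma fOcc_iff_OccursAt {u w : List Letter} {q : ℕ} :
    fOcc u w q ↔ OccursAt u w (q + 1) := by
  unfold OccursAt
  simp only [Nat.add_sub_cancel]
  constructor
  · rintro ⟨hlen, hlet⟩
    refine ⟨by omega, by omega, ?_⟩
    apply List.ext_getElem
    · rw [List.length_take, List.length_drop]; omega
    · intro l h1 h2
      rw [List.getElem_take, List.getElem_drop]
      have := hlet l h2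
      rw [List.getD_eq_getElem _ _ (by omega : q + l < w.length),
        List.getD_eq_getElem _ _ h2] at this
      exact this
  · rintro ⟨-, hlen, heq⟩
    refine ⟨by omega, fun l hl => ?_⟩
    have h2 : l < ((w.drop q).take u.length).length := by
      rw [List.length_take, List.length_drop]; omega
    have h3 := List.getElem_of_eq heq h2
    rw [List.getElem_take, List.getElem_drop] at h3
    rw [List.getD_eq_getElem _ _ (by omega : q + l < w.length),
      List.getD_eq_getElem _ _ hl, h3]

lemma IsFactor_iff {u w : List Letter} : IsFactor u w ↔ ∃ q, fOcc u w q := by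
  constructor
  · rintro ⟨i, hi⟩
    have h1 : 1 ≤ i := hi.1
    exact ⟨i - 1, fOcc_iff_OccursAt.2 (by rwa [Nat.sub_add_cancel h1])⟩
  · rintro ⟨q, hq⟩
    exact ⟨q + 1, fOcc_iff_OccursAt.1 hq⟩

lemma fOcc_middle (μ1 ω μ2 : List Letter) : fOcc ω (μ1 ++ ω ++ μ2) μ1.length := by
  refine ⟨by simp only [List.length_append]; omega, fun l hl => ?_⟩
  rw [List.append_assoc, List.getD_append_right _ _ _ _ (by omega),
    Nat.add_sub_cancel_left, List.getD_append _ _ _ _ hl]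

/-! ### Arithmetic non-shift lemmas -/

lemma shiftI {e q c : ℕ}
    (h : ∀ t, D t = Letter.a → ∃ t', D t' = Letter.a ∧ 2^e * t + q = 2^e * t' + c) :
    q = c := by
  have hE : 0 < 2^e := Nat.two_pow_pos e
  obtain ⟨δ, hδa, hδ⟩ := h 0 D0
  rw [Nat.mul_zero, Nat.zero_add] at hδ
  rcases Nat.eq_zero_or_pos δ with h0 | hpos
  · subst h0; simpa using hδ
  · exfalso
    obtain ⟨t, hta, htb⟩ := (NS δ hpos).1
    obtain ⟨t', ht'a, ht'⟩ := h t hta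
    have hmul : 2^e * (t + δ) = 2^e * t' := by rw [Nat.mul_add]; omega
    have : t + δ = t' := Nat.eq_of_mul_eq_mul_left hE hmul
    rw [← this, htb] at ht'a
    exact absurd ht'a (by simp)

lemma shiftII {e q c : ℕ}
    (h : ∀ t r, D t = Letter.a → r < 2 → ∃ t' r', D t' = Letter.a ∧ r' < 2 ∧
      2^(e+2) * t + r * 2^e + q = 2^(e+2) * t' + r' * 2^e + c) :
    q = c := by
  have hE : 0 < 2^e := Nat.two_pow_pos e
  have h4 : (2:ℕ)^(e+2) = 4 * 2^e := by rw [pow_succ, pow_succ]; ring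
  obtain ⟨t0, r0, ht0, hr0, h0⟩ := h 0 0 D0 (by norm_num)
  rw [h4] at h0
  obtain ⟨t1, r1, ht1, hr1, h1⟩ := h 0 1 D0 (by norm_num)
  rw [h4] at h1
  -- q = 2^e * (4 t0 + r0) + c  and  2^e + q = 2^e * (4 t1 + r1) + c
  have e0 : q = 2^e * (4 * t0 + r0) + c := by
    have : 2^e * (4 * t0 + r0) = 4 * 2^e * t0 + r0 * 2^e := by ring
    omega
  have e1 : 2^e + q = 2^e * (4 * t1 + r1) + c := by
    have : 2^e * (4 * t1 + r1) = 4 * 2^e * t1 + r1 * 2^e := by ring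
    omega
  have e2 : 2^e * (4 * t0 + r0 + 1) = 2^e * (4 * t1 + r1) := by rw [Nat.mul_add]; omega
  have e3 : 4 * t0 + r0 + 1 = 4 * t1 + r1 := Nat.eq_of_mul_eq_mul_left hE e2
  have hr00 : r0 = 0 := by omega
  subst hr00
  -- so q = 2^e * 4 * t0 + c; closure t ↦ t + t0
  rcases Nat.eq_zero_or_pos t0 with ht00 | hpos
  · subst ht00; simpa using e0
  · exfalso
    obtain ⟨t, hta, htb⟩ := (NS t0 hpos).1
    obtain ⟨t', r', ht'a, hr', h2⟩ := h t 0 hta (by norm_num)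
    rw [h4] at h2
    have e4 : 2^e * (4 * (t + t0)) = 2^e * (4 * t' + r') := by
      have c1 : 2^e * (4 * (t + t0)) = 4 * 2^e * t + 2^e * (4 * t0 + 0) := by ring
      have c2 : 2^e * (4 * t' + r') = 4 * 2^e * t' + r' * 2^e := by ring
      omega
    have e5 : 4 * (t + t0) = 4 * t' + r' := Nat.eq_of_mul_eq_mul_left hE e4
    have : t' = t + t0 := by omega
    rw [this, htb] at ht'a
    exact absurd ht'a (by simp)

lemma pow_no_small_shift {e f a0 a1 : ℕ} (hef : e < f) (heq : 2^f * a1 = 2^f * a0 + 2^e) :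
    False := by
  have hEe : 0 < 2^e := Nat.two_pow_pos e
  have hlt : a0 < a1 := by
    have : 2^f * a0 < 2^f * a1 := by omega
    exact Nat.lt_of_mul_lt_mul_left this
  obtain ⟨d, hd⟩ := Nat.exists_eq_add_of_le (Nat.succ_le_of_lt hlt)
  have hd1 : a1 = a0 + (d + 1) := by omega
  rw [hd1, Nat.mul_add] at heq
  have : 2^f * (d + 1) = 2^e := by omega
  have h1 : 2^f ≤ 2^e := by
    calc 2^f ≤ 2^f * (d+1) := Nat.le_mul_of_pos_right _ (by omega)
    _ = 2^e := this
  have h2 : 2^e < 2^f := Nat.pow_lt_pow_right (by norm_num) hef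
  omega

lemma X2 {e f q c : ℕ} (hef : e < f)
    (h : ∀ t, D t = Letter.a → ∃ t', D t' = Letter.a ∧ 2^e * t + q = 2^f * t' + c) :
    False := by
  obtain ⟨a0, ha0, h0⟩ := h 2 D2
  obtain ⟨a1, ha1, h1⟩ := h 3 D3
  refine pow_no_small_shift hef (a0 := a0) (a1 := a1) ?_
  have c1 : 2^e * 3 = 2^e * 2 + 2^e := by ring
  omega

lemma X3 {e f q c : ℕ} (hef : e < f)
    (h : ∀ t r, D t = Letter.a → r < 2 → ∃ t', D t' = Letter.a ∧
      2^(e+2) * t + r * 2^e + q = 2^f * t' + c) :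
    False := by
  obtain ⟨a0, ha0, h0⟩ := h 0 0 D0 (by norm_num)
  obtain ⟨a1, ha1, h1⟩ := h 0 1 D0 (by norm_num)
  refine pow_no_small_shift hef (a0 := a0) (a1 := a1) ?_
  omega

lemma X1aux {E u q c a a' d r : ℕ} (hE : 0 < E) (hd : d = 1 ∨ d = 2)
    (h1 : E * u + q = 4 * E * a + r * E + c)
    (h2 : E * u + d * E + q = 4 * E * a' + r * E + c) : False := by
  have e1 : 4 * E * a' = 4 * E * a + d * E := by omega
  have e2 : E * (4 * a') = E * (4 * a + d) := by
    have c1 : E * (4 * a') = 4 * E * a' := by ring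
    have c2 : E * (4 * a + d) = 4 * E * a + d * E := by ring
    omega
  have := Nat.eq_of_mul_eq_mul_left hE e2
  omega

lemma X1 {e q c : ℕ}
    (h : ∀ t, D t = Letter.a → ∃ t' r', D t' = Letter.a ∧ r' < 2 ∧
      2^e * t + q = 2^(e+2) * t' + r' * 2^e + c) :
    False := by
  have hE : 0 < 2^e := Nat.two_pow_pos e
  have h4 : (2:ℕ)^(e+2) = 4 * 2^e := by rw [pow_succ, pow_succ]; ring
  obtain ⟨a0, r0, ha0, hr0, h0⟩ := h 2 D2
  obtain ⟨a1, r1, ha1, hr1, h1⟩ := h 3 D3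
  obtain ⟨a2, r2, ha2, hr2, h2⟩ := h 4 D4
  rw [h4] at h0 h1 h2
  have k0 : 2^e * 2 + q = 4 * 2^e * a0 + r0 * 2^e + c := h0
  have k1 : 2^e * 2 + 1 * 2^e + q = 4 * 2^e * a1 + r1 * 2^e + c := by
    have : 2^e * 3 = 2^e * 2 + 1 * 2^e := by ring
    omega
  have k2 : 2^e * 2 + 2 * 2^e + q = 4 * 2^e * a2 + r2 * 2^e + c := by
    have : 2^e * 4 = 2^e * 2 + 2 * 2^e := by ring
    omega
  have htri : r0 = r1 ∨ r0 = r2 ∨ r1 = r2 := by omega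
  rcases htri with he | he | he
  · subst he; exact X1aux hE (Or.inl rfl) k0 k1
  · subst he; exact X1aux hE (Or.inr rfl) k0 k2
  · subst he
    have k1' : 2^e * 3 + q = 4 * 2^e * a1 + r1 * 2^e + c := h1
    have k2' : 2^e * 3 + 1 * 2^e + q = 4 * 2^e * a2 + r1 * 2^e + c := by
      have : 2^e * 4 = 2^e * 3 + 1 * 2^e := by ring
      omega
    exact X1aux hE (Or.inl rfl) k1' k2'

/-! ### comp iterates -/

lemma compIter_invol (e : ℕ) (x : Letter) : comp^[e] (comp^[e] x) = x := by
  rw [← Function.iterate_add_apply, ← two_mul, Function.iterate_mul]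
  have h2 : comp^[2] = id := funext fun z => comp_comp z
  rw [h2, Function.iterate_id, id_eq]

lemma compIter_cancel {e : ℕ} {x y : Letter} : comp^[e] x = y ↔ x = comp^[e] y := by
  constructor
  · rintro rfl; rw [compIter_invol]
  · rintro rfl; rw [compIter_invol]

lemma compIter_ab (e : ℕ) :
    (comp^[e] Letter.a = Letter.a ∧ comp^[e] Letter.b = Letter.b) ∨
    (comp^[e] Letter.a = Letter.b ∧ comp^[e] Letter.b = Letter.a) := by
  induction e with
  | zero => left; exact ⟨rfl, rfl⟩
  | succ e ih =>
    rcases ih with ⟨h1, h2⟩ | ⟨h1, h2⟩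
    · right
      rw [Function.iterate_succ_apply', Function.iterate_succ_apply', h1, h2]
      exact ⟨rfl, rfl⟩
    · left
      rw [Function.iterate_succ_apply', Function.iterate_succ_apply', h1, h2]
      exact ⟨rfl, rfl⟩

/-! ### The main induction statement -/

def MS (ω : List Letter) : Prop :=
  ∃ K c,
    (∀ i, dOcc ω i ↔ ∃ j, dOcc (Eword K) j ∧ i = j + c) ∧
    (∀ q, fOcc ω (Eword K) q ↔ q = c) ∧
    (∀ j, j < K → ∀ q, ¬ fOcc ω (Eword j) q)

lemma dOccE1_zero (e : ℕ) : dOcc (E1 (e + 1)) 0 :=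
  (occE1 e 0).2 ⟨0, D0, by simp⟩

lemma dOccE2_first (e : ℕ) : dOcc (E2 (e + 1)) (2 ^ (e + 1)) :=
  (occE2 e _).2 ⟨0, 0, D0, by norm_num, by simp⟩


/-- Assemble MS when the occurrence set is that of E1 (f+1) shifted by c. -/
lemma targetE1 {f c : ℕ} {ω : List Letter}
    (hocc : ∀ i, dOcc ω i ↔ ∃ t, D t = Letter.a ∧ i = 2 ^ f * t + c)
    (hfit : c + ω.length ≤ (E1 (f + 1)).length)
    (hmin : ∀ j, j < 2 * f → ∀ q, ¬ fOcc ω (Eword j) q) : MS ω := by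
  refine ⟨2 * f, c, ?_, ?_, ?_⟩
  · intro i
    rw [Eword_even f, hocc]
    constructor
    · rintro ⟨t, ht, rfl⟩
      exact ⟨2 ^ f * t, (occE1 f _).2 ⟨t, ht, rfl⟩, rfl⟩
    · rintro ⟨j, hj, rfl⟩
      obtain ⟨t, ht, rfl⟩ := (occE1 f j).1 hj
      exact ⟨t, ht, rfl⟩
  · rw [Eword_even f]
    have base : fOcc ω (E1 (f + 1)) c := by
      have h2 : dOcc ω (0 + c) := (hocc _).2 ⟨0, D0, by simp⟩
      exact fOcc_of_dOcc (dOccE1_zero f) h2 hfit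
    intro q
    constructor
    · intro hq
      apply shiftI (e := f) (q := q) (c := c)
      intro t ht
      have h1 : dOcc (E1 (f + 1)) (2 ^ f * t) := (occE1 f _).2 ⟨t, ht, rfl⟩
      have h2 : dOcc ω (2 ^ f * t + q) := dOcc_of_fOcc hq h1
      obtain ⟨t', ht', he⟩ := (hocc _).1 h2
      exact ⟨t', ht', he⟩
    · rintro rfl
      exact base
  · exact hmin

/-- Assemble MS when the occurrence set is that of E2 (e+1) shifted by c.
Also handles minimality at index 2*e via X1. -/
lemma targetE2 {e c : ℕ} {ω : List Letter}
    (hocc : ∀ i, dOcc ω i ↔ ∃ t r, D t = Letter.a ∧ r < 2 ∧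
      i = (2 ^ (e + 2) * t + 2 ^ (e + 1) + r * 2 ^ e) + c)
    (hfit : c + ω.length ≤ (E2 (e + 1)).length)
    (hminlow : ∀ j, j < 2 * e → ∀ q, ¬ fOcc ω (Eword j) q) : MS ω := by
  refine ⟨2 * e + 1, c, ?_, ?_, ?_⟩
  · intro i
    rw [Eword_odd e, hocc]
    constructor
    · rintro ⟨t, r, ht, hr, rfl⟩
      exact ⟨_, (occE2 e _).2 ⟨t, r, ht, hr, rfl⟩, rfl⟩
    · rintro ⟨j, hj, rfl⟩
      obtain ⟨t, r, ht, hr, rfl⟩ := (occE2 e j).1 hj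
      exact ⟨t, r, ht, hr, rfl⟩
  · rw [Eword_odd e]
    have base : fOcc ω (E2 (e + 1)) c := by
      have h2 : dOcc ω (2 ^ (e + 1) + c) := by
        apply (hocc _).2
        exact ⟨0, 0, D0, by norm_num, by simp⟩
      exact fOcc_of_dOcc (dOccE2_first e) h2 hfit
    intro q
    constructor
    · intro hq
      apply shiftII (e := e) (q := q) (c := c)
      intro t r ht hr
      have h1 : dOcc (E2 (e + 1)) (2 ^ (e + 2) * t + 2 ^ (e + 1) + r * 2 ^ e) :=
        (occE2 e _).2 ⟨t, r, ht, hr, rfl⟩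
      have h2 := dOcc_of_fOcc hq h1
      obtain ⟨t', r', ht', hr', he⟩ := (hocc _).1 h2
      exact ⟨t', r', ht', hr', by omega⟩
    · rintro rfl
      exact base
  · intro j hj q
    rcases Nat.lt_or_ge j (2 * e) with hlow | hhigh
    · exact hminlow j hlow q
    · have hje : j = 2 * e := by omega
      subst hje
      rw [Eword_even e]
      intro hq
      apply X1 (e := e) (q := q) (c := 2 ^ (e + 1) + c)
      intro t ht
      have h1 : dOcc (E1 (e + 1)) (2 ^ e * t) := (occE1 e _).2 ⟨t, ht, rfl⟩
      have h2 := dOcc_of_fOcc hq h1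
      obtain ⟨t', r', ht', hr', he⟩ := (hocc _).1 h2
      exact ⟨t', r', ht', hr', by omega⟩


lemma hardE1_A1 {e : ℕ} {ω : List Letter}
    (key' : ∀ i, dOcc ω i ↔ ∃ s, (D s = Letter.a ∧ D (s + 1) = Letter.a) ∧
      i = 2 ^ e * s + (2 ^ e - 1))
    (hfit : ω.length ≤ 2 ^ (e + 1))
    (hminlow : ∀ j, j < 2 * e → ∀ q, ¬ fOcc ω (Eword j) q) : MS ω := by
  have hE : (1:ℕ) ≤ 2 ^ e := Nat.one_le_two_pow
  have p1 : (2:ℕ) ^ (e + 1) = 2 * 2 ^ e := by rw [pow_succ]; ring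
  have p2 : (2:ℕ) ^ (e + 2) = 4 * 2 ^ e := by rw [pow_succ, pow_succ]; ring
  have harr : ∀ t r : ℕ, 2 ^ e * (4 * t + 2 + r) = 2 ^ (e + 2) * t + 2 ^ (e + 1) + r * 2 ^ e := by
    intro t r; rw [p2, p1]; ring
  have key2 : ∀ i, dOcc ω i ↔ ∃ t r, D t = Letter.a ∧ r < 2 ∧
      i = (2 ^ (e + 2) * t + 2 ^ (e + 1) + r * 2 ^ e) + (2 ^ e - 1) := by
    intro i
    rw [key' i]
    constructor
    · rintro ⟨s, ⟨hs, hs1⟩, rfl⟩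
      obtain ⟨t, r, ht, hr, rfl⟩ := aa_iff.1 ⟨hs, hs1⟩
      exact ⟨t, r, ht, hr, by have := harr t r; omega⟩
    · rintro ⟨t, r, ht, hr, rfl⟩
      exact ⟨4 * t + 2 + r, aa_iff.2 ⟨t, r, ht, hr, rfl⟩, by have := harr t r; omega⟩
  apply targetE2 (e := e) (c := 2 ^ e - 1) key2 ?_ hminlow
  rw [length_E2]
  omega

lemma hardE1_A2 {e : ℕ} {ω : List Letter}
    (key' : ∀ i, dOcc ω i ↔ ∃ s, (D s = Letter.b ∧ D (s + 1) = Letter.a) ∧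
      i = 2 ^ e * s + (2 ^ e - 1))
    (hfit : ω.length ≤ 2 ^ (e + 1))
    (hminlow : ∀ j, j < 2 * e → ∀ q, ¬ fOcc ω (Eword j) q) : MS ω := by
  have hE : (1:ℕ) ≤ 2 ^ e := Nat.one_le_two_pow
  have p1 : (2:ℕ) ^ (e + 1) = 2 * 2 ^ e := by rw [pow_succ]; ring
  have p2 : (2:ℕ) ^ (e + 2) = 4 * 2 ^ e := by rw [pow_succ, pow_succ]; ring
  have harr : ∀ u : ℕ, 2 ^ e * (2 * u + 1) = 2 ^ (e + 1) * u + 2 ^ e := by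
    intro u; rw [p1]; ring
  have key2 : ∀ i, dOcc ω i ↔ ∃ u, D u = Letter.a ∧ i = 2 ^ (e + 1) * u + (2 ^ (e + 1) - 1) := by
    intro i
    rw [key' i]
    constructor
    · rintro ⟨s, ⟨hs, hs1⟩, rfl⟩
      obtain ⟨u, hu, rfl⟩ := b_iff.1 hs
      exact ⟨u, hu, by have := harr u; omega⟩
    · rintro ⟨u, hu, rfl⟩
      refine ⟨2 * u + 1, ⟨b_iff.2 ⟨u, hu, rfl⟩, ?_⟩, by have := harr u; omega⟩
      have h5 : 2 * u + 1 + 1 = 2 * (u + 1) := by ring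
      rw [h5, R1]
  apply targetE1 (f := e + 1) (c := 2 ^ (e + 1) - 1) key2 ?_ ?_
  · rw [length_E1]
    have p2' : (2:ℕ) ^ (e + 2) = 2 * 2 ^ (e+1) := by rw [pow_succ]; ring
    omega
  · intro j hj q hq
    rcases Nat.lt_or_ge j (2 * e) with h1 | h1
    · exact hminlow j h1 q hq
    rcases (by omega : j = 2 * e ∨ j = 2 * e + 1) with rfl | rfl
    · rw [Eword_even e] at hq
      apply X2 (e := e) (f := e + 1) (q := q) (c := 2 ^ (e + 1) - 1) (by omega)
      intro t ht
      have h2 := dOcc_of_fOcc hq ((occE1 e _).2 ⟨t, ht, rfl⟩)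
      obtain ⟨u, hu, heq⟩ := (key2 _).1 h2
      exact ⟨u, hu, by omega⟩
    · rw [Eword_odd e] at hq
      apply X3 (e := e) (f := e + 1) (q := q + 2 ^ (e + 1)) (c := 2 ^ (e + 1) - 1) (by omega)
      intro t r ht hr
      have h2 := dOcc_of_fOcc hq ((occE2 e _).2 ⟨t, r, ht, hr, rfl⟩)
      obtain ⟨u, hu, heq⟩ := (key2 _).1 h2
      exact ⟨u, hu, by omega⟩

/-- Hard case, sub-case A : the tail has envelope E1 (e+1) at offset 0. -/
lemma hardE1 {e : ℕ} {y : Letter} {ω'' : List Letter}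
    (hyab : y = Letter.a ∨ y = Letter.b)
    (hocc'' : ∀ i, dOcc ω'' i ↔ dOcc (E1 (e + 1)) i)
    (hfit'' : ω''.length ≤ (E1 (e + 1)).length)
    (hmin'' : ∀ j, j < 2 * e → ∀ q, ¬ fOcc ω'' (Eword j) q) :
    MS (y :: ω'') := by
  have hE : (1:ℕ) ≤ 2 ^ e := Nat.one_le_two_pow
  have p1 : (2:ℕ) ^ (e + 1) = 2 * 2 ^ e := by rw [pow_succ]; ring
  have p2 : (2:ℕ) ^ (e + 2) = 4 * 2 ^ e := by rw [pow_succ, pow_succ]; ring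
  have p3 : (2:ℕ) ^ (e + 3) = 8 * 2 ^ e := by rw [pow_succ, pow_succ, pow_succ]; ring
  -- the general occurrence description
  have key : ∀ i, dOcc (y :: ω'') i ↔
      ∃ s, (D s = comp^[e] y ∧ D (s + 1) = Letter.a) ∧ i = 2 ^ e * s + (2 ^ e - 1) := by
    intro i
    rw [dOcc_cons]
    constructor
    · rintro ⟨hDi, htail⟩
      obtain ⟨t, ht, hit⟩ := (occE1 e (i + 1)).1 ((hocc'' (i + 1)).1 htail)
      have ht1 : 1 ≤ t := by
        rcases Nat.eq_zero_or_pos t with rfl | h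
        · omega
        · exact h
      have hms : 2 ^ e * t = 2 ^ e * (t - 1) + 2 ^ e := by
        rw [← Nat.mul_succ]; congr 1; omega
      have hi' : i = 2 ^ e * (t - 1) + (2 ^ e - 1) := by omega
      have hb := blockend e (t - 1)
      rw [← hi', hDi] at hb
      refine ⟨t - 1, ⟨compIter_cancel.1 hb.symm, ?_⟩, hi'⟩
      have h5 : t - 1 + 1 = t := by omega
      rw [h5]; exact ht
    · rintro ⟨s, ⟨hs, hs1⟩, rfl⟩
      constructor
      · have hb := blockend e s
        rw [hs] at hb
        rw [hb]
        rcases hyab with rfl | rfl <;> rw [compIter_invol]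
      · apply (hocc'' _).2
        apply (occE1 e _).2
        exact ⟨s + 1, hs1, by rw [Nat.mul_succ]; omega⟩
  have hfitω : (y :: ω'').length ≤ 2 ^ (e + 1) := by
    rw [List.length_cons]
    rw [length_E1] at hfit''
    have : (1:ℕ) ≤ 2 ^ (e+1) := Nat.one_le_two_pow
    omega
  have hminlow : ∀ j, j < 2 * e → ∀ q, ¬ fOcc (y :: ω'') (Eword j) q :=
    fun j hj q hq => hmin'' j hj (q + 1) (fOcc_cons_tail hq)
  rcases hyab with rfl | rfl
  all_goals rcases compIter_ab e with ⟨hca, hcb⟩ | ⟨hca, hcb⟩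
  case inl.inl =>
    exact hardE1_A1 (fun i => by rw [key i, hca]) hfitω hminlow
  case inl.inr =>
    exact hardE1_A2 (fun i => by rw [key i, hca]) hfitω hminlow
  case inr.inl =>
    exact hardE1_A2 (fun i => by rw [key i, hcb]) hfitω hminlow
  case inr.inr =>
    exact hardE1_A1 (fun i => by rw [key i, hcb]) hfitω hminlow

lemma hardE2_fin {e c : ℕ} {ω : List Letter}
    (key2 : ∀ i, dOcc ω i ↔ ∃ t, D t = Letter.a ∧ i = 2 ^ (e + 2) * t + c)
    (hc : c ≤ 2 ^ (e + 1) + 2 ^ e - 1)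
    (hfit : ω.length ≤ 2 ^ (e + 1) + 2 ^ e)
    (hminlow : ∀ j, j < 2 * e + 1 → ∀ q, ¬ fOcc ω (Eword j) q) : MS ω := by
  have hE : (1:ℕ) ≤ 2 ^ e := Nat.one_le_two_pow
  have p1 : (2:ℕ) ^ (e + 1) = 2 * 2 ^ e := by rw [pow_succ]; ring
  have p2 : (2:ℕ) ^ (e + 2) = 4 * 2 ^ e := by rw [pow_succ, pow_succ]; ring
  have p3 : (2:ℕ) ^ (e + 3) = 8 * 2 ^ e := by rw [pow_succ, pow_succ, pow_succ]; ring
  apply targetE1 (f := e + 2) (c := c) key2 ?_ ?_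
  · rw [length_E1, p3]
    omega
  · intro j hj q hq
    rcases Nat.lt_or_ge j (2 * e + 1) with h1 | h1
    · exact hminlow j h1 q hq
    rcases (by omega : j = 2 * e + 1 ∨ j = 2 * e + 2 ∨ j = 2 * e + 3) with rfl | rfl | rfl
    · rw [Eword_odd e] at hq
      apply X3 (e := e) (f := e + 2) (q := q + 2 ^ (e + 1)) (c := c) (by omega)
      intro t r ht hr
      have h2 := dOcc_of_fOcc hq ((occE2 e _).2 ⟨t, r, ht, hr, rfl⟩)
      obtain ⟨u, hu, heq⟩ := (key2 _).1 h2
      exact ⟨u, hu, by omega⟩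
    · have hje : 2 * e + 2 = 2 * (e + 1) := by ring
      rw [hje, Eword_even (e + 1)] at hq
      apply X2 (e := e + 1) (f := e + 2) (q := q) (c := c) (by omega)
      intro t ht
      have h2 := dOcc_of_fOcc hq ((occE1 (e + 1) _).2 ⟨t, ht, rfl⟩)
      obtain ⟨u, hu, heq⟩ := (key2 _).1 h2
      exact ⟨u, hu, by omega⟩
    · have hje : 2 * e + 3 = 2 * (e + 1) + 1 := by ring
      rw [hje, Eword_odd (e + 1)] at hq
      apply X3 (e := e + 1) (f := e + 2) (q := q + 2 ^ (e + 2)) (c := c) (by omega)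
      intro t r ht hr
      have h2 := dOcc_of_fOcc hq ((occE2 (e + 1) _).2 ⟨t, r, ht, hr, rfl⟩)
      obtain ⟨u, hu, heq⟩ := (key2 _).1 h2
      exact ⟨u, hu, by omega⟩

/-- Hard case, sub-case B : the tail has envelope E2 (e+1) at offset 0. -/
lemma hardE2 {e : ℕ} {y : Letter} {ω'' : List Letter}
    (hyab : y = Letter.a ∨ y = Letter.b)
    (hocc'' : ∀ i, dOcc ω'' i ↔ dOcc (E2 (e + 1)) i)
    (hfit'' : ω''.length ≤ (E2 (e + 1)).length)
    (hmin'' : ∀ j, j < 2 * e + 1 → ∀ q, ¬ fOcc ω'' (Eword j) q) :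
    MS (y :: ω'') := by
  have hE : (1:ℕ) ≤ 2 ^ e := Nat.one_le_two_pow
  have p1 : (2:ℕ) ^ (e + 1) = 2 * 2 ^ e := by rw [pow_succ]; ring
  have p2 : (2:ℕ) ^ (e + 2) = 4 * 2 ^ e := by rw [pow_succ, pow_succ]; ring
  have harr : ∀ t r : ℕ, 2 ^ e * (4 * t + 2 + r) = 2 ^ (e + 2) * t + 2 ^ (e + 1) + r * 2 ^ e := by
    intro t r; rw [p2, p1]; ring
  have harr1 : ∀ t r : ℕ, 2 ^ e * (4 * t + 1 + r) + 2 ^ e = 2 ^ e * (4 * t + 2 + r) := by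
    intro t r; ring_nf
  have hDb : ∀ t : ℕ, D (4 * t + 1) = Letter.b := by
    intro t
    have h5 : 4 * t + 1 = 2 * (2 * t) + 1 := by ring
    rw [h5, R2, R1, compa]
  have hDa : ∀ t : ℕ, D (4 * t + 2) = Letter.a := by
    intro t
    have h5 : 4 * t + 2 = 2 * (2 * t + 1) := by ring
    rw [h5, R1]
  have key : ∀ i, dOcc (y :: ω'') i ↔
      ∃ t r, (D t = Letter.a ∧ r < 2 ∧ D (4 * t + 1 + r) = comp^[e] y) ∧
        i = 2 ^ e * (4 * t + 1 + r) + (2 ^ e - 1) := by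
    intro i
    rw [dOcc_cons]
    constructor
    · rintro ⟨hDi, htail⟩
      obtain ⟨t, r, ht, hr, hit⟩ := (occE2 e (i + 1)).1 ((hocc'' (i + 1)).1 htail)
      have hit' : i + 1 = 2 ^ e * (4 * t + 2 + r) := by
        have := harr t r; omega
      have hi' : i = 2 ^ e * (4 * t + 1 + r) + (2 ^ e - 1) := by
        have := harr1 t r; omega
      have hb := blockend e (4 * t + 1 + r)
      rw [← hi', hDi] at hb
      exact ⟨t, r, ⟨ht, hr, compIter_cancel.1 hb.symm⟩, hi'⟩
    · rintro ⟨t, r, ⟨ht, hr, hd⟩, rfl⟩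
      constructor
      · have hb := blockend e (4 * t + 1 + r)
        rw [hd] at hb
        rw [hb]
        rcases hyab with rfl | rfl <;> rw [compIter_invol]
      · apply (hocc'' _).2
        apply (occE2 e _).2
        refine ⟨t, r, ht, hr, ?_⟩
        have h6 := harr1 t r
        have h7 := harr t r
        omega
  have hfitω : (y :: ω'').length ≤ 2 ^ (e + 1) + 2 ^ e := by
    rw [List.length_cons]
    rw [length_E2] at hfit''
    omega
  have hminlow : ∀ j, j < 2 * e + 1 → ∀ q, ¬ fOcc (y :: ω'') (Eword j) q :=
    fun j hj q hq => hmin'' j hj (q + 1) (fOcc_cons_tail hq)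
  have hccase : comp^[e] y = Letter.a ∨ comp^[e] y = Letter.b := by
    rcases hyab with rfl | rfl <;> rcases compIter_ab e with ⟨h1, h2⟩ | ⟨h1, h2⟩ <;>
      simp [h1, h2]
  rcases hccase with hcy | hcy
  · -- comp^[e] y = a : select r = 1, target E1 (e+3), c = 2^(e+1) + 2^e - 1
    apply hardE2_fin (e := e) (c := 2 ^ (e + 1) + 2 ^ e - 1) ?_ (by omega) hfitω hminlow
    intro i
    rw [key i]
    constructor
    · rintro ⟨t, r, ⟨ht, hr, hd⟩, rfl⟩
      rcases (by omega : r = 0 ∨ r = 1) with rfl | rfl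
      · exfalso
        rw [hcy] at hd
        rw [Nat.add_zero, hDb t] at hd
        exact absurd hd (by simp)
      · refine ⟨t, ht, ?_⟩
        have h8 : 2 ^ e * (4 * t + 1 + 1) = 2 ^ (e + 2) * t + 2 ^ e + 2 ^ e := by
          rw [p2]; ring
        omega
    · rintro ⟨t, ht, rfl⟩
      refine ⟨t, 1, ⟨ht, by norm_num, ?_⟩, ?_⟩
      · rw [hcy]
        have h5 : 4 * t + 1 + 1 = 4 * t + 2 := by ring
        rw [h5]; exact hDa t
      · have h8 : 2 ^ e * (4 * t + 1 + 1) = 2 ^ (e + 2) * t + 2 ^ e + 2 ^ e := by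
          rw [p2]; ring
        omega
  · -- comp^[e] y = b : select r = 0, target E1 (e+3), c = 2^(e+1) - 1
    apply hardE2_fin (e := e) (c := 2 ^ (e + 1) - 1) ?_ (by omega) hfitω hminlow
    intro i
    rw [key i]
    constructor
    · rintro ⟨t, r, ⟨ht, hr, hd⟩, rfl⟩
      rcases (by omega : r = 0 ∨ r = 1) with rfl | rfl
      · refine ⟨t, ht, ?_⟩
        have h8 : 2 ^ e * (4 * t + 1 + 0) = 2 ^ (e + 2) * t + 2 ^ e := by
          rw [p2]; ring
        omega
      · exfalso
        rw [hcy] at hd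
        have h5 : 4 * t + 1 + 1 = 4 * t + 2 := by ring
        rw [h5, hDa t] at hd
        exact absurd hd (by simp)
    · rintro ⟨t, ht, rfl⟩
      refine ⟨t, 0, ⟨ht, by norm_num, ?_⟩, ?_⟩
      · rw [hcy, Nat.add_zero]; exact hDb t
      · have h8 : 2 ^ e * (4 * t + 1 + 0) = 2 ^ (e + 2) * t + 2 ^ e := by
          rw [p2]; ring
        omega

lemma E1_two : E1 2 = [Letter.a, Letter.b, Letter.a] := rfl

lemma Eword0 : Eword 0 = [Letter.a] := rfl
lemma Eword1 : Eword 1 = [Letter.a, Letter.a] := rfl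
lemma Eword2 : Eword 2 = [Letter.a, Letter.b, Letter.a] := rfl

theorem MS_main : ∀ n (ω : List Letter), ω.length = n → ω ≠ [] → (∃ i, dOcc ω i) → MS ω := by
  intro n
  induction n using Nat.strong_induction_on with
  | _ n ih =>
    intro ω hlen hne hfac
    cases ω with
    | nil => exact absurd rfl hne
    | cons y ω'' =>
      obtain ⟨i0, hi0⟩ := hfac
      obtain ⟨hy, htail0⟩ := dOcc_cons.1 hi0
      have hyab : y = Letter.a ∨ y = Letter.b := by rw [← hy]; exact Dab i0
      by_cases hω : ω'' = []
      · -- base case : single letters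
        subst hω
        rcases hyab with rfl | rfl
        · refine ⟨0, 0, ?_, ?_, ?_⟩
          · intro i
            rw [Eword0]
            exact ⟨fun h => ⟨i, h, rfl⟩, by rintro ⟨j, hj, rfl⟩; exact hj⟩
          · intro q
            rw [Eword0]
            constructor
            · rintro ⟨hl, -⟩
              simp only [List.length_cons, List.length_nil] at hl
              omega
            · rintro rfl
              refine ⟨by simp, fun l hl => ?_⟩
              simp only [List.length_cons, List.length_nil] at hl
              interval_cases l
              rfl
          · intro j hj; omega
        · refine ⟨2, 1, ?_, ?_, ?_⟩
          · intro i
            rw [Eword2, ← E1_two]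
            constructor
            · intro h
              have hb : D i = Letter.b := (dOcc_cons.1 h).1
              obtain ⟨u, hu, rfl⟩ := b_iff.1 hb
              exact ⟨2 * u, (occE1 1 _).2 ⟨u, hu, by norm_num⟩, by omega⟩
            · rintro ⟨j, hj, rfl⟩
              obtain ⟨u, hu, rfl⟩ := (occE1 1 j).1 hj
              refine dOcc_cons.2 ⟨?_, dOcc_nil _⟩
              have h5 : 2 ^ 1 * u + 1 = 2 * u + 1 := by norm_num
              rw [h5, R2, hu, compa]
          · intro q
            rw [Eword2]
            constructor
            · rintro ⟨hl, hle⟩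
              simp only [List.length_cons, List.length_nil] at hl
              have hle0 := hle 0 (by norm_num)
              rcases (by omega : q = 0 ∨ q = 1 ∨ q = 2) with rfl | rfl | rfl
              · simp [List.getD] at hle0
              · rfl
              · simp [List.getD] at hle0
            · rintro rfl
              refine ⟨by simp, fun l hl => ?_⟩
              simp only [List.length_cons, List.length_nil] at hl
              interval_cases l
              rfl
          · intro j hj q hq
            obtain ⟨hl, hle⟩ := hq
            interval_cases j
            · rw [Eword0] at hl hle
              simp only [List.length_cons, List.length_nil] at hl
              have hle0 := hle 0 (by norm_num)
              rcases (by omega : q = 0) with rfl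
              simp [List.getD] at hle0
            · rw [Eword1] at hl hle
              simp only [List.length_cons, List.length_nil] at hl
              have hle0 := hle 0 (by norm_num)
              rcases (by omega : q = 0 ∨ q = 1) with rfl | rfl <;>
                simp [List.getD] at hle0
      · -- inductive step
        have hω''len : ω''.length < n := by rw [← hlen]; simp
        obtain ⟨k'', c'', hocc'', huniq'', hmin''⟩ :=
          ih ω''.length hω''len ω'' rfl hω ⟨i0 + 1, htail0⟩
        have hfO'' : fOcc ω'' (Eword k'') c'' := (huniq'' c'').2 rfl
        by_cases hc : c'' = 0
        · subst hc
          rcases Nat.even_or_odd k'' with ⟨e, hk⟩ | ⟨e, hk⟩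
          · have hk2 : k'' = 2 * e := by omega
            rw [hk2] at hocc'' hmin'' hfO''
            rw [Eword_even e] at hfO''
            apply hardE1 (e := e) hyab ?_ ?_ ?_
            · intro i
              rw [hocc'' i, Eword_even e]
              exact ⟨by rintro ⟨j, hj, rfl⟩; exact hj, fun h => ⟨i, h, rfl⟩⟩
            · have h1 := hfO''.1
              omega
            · intro j hj q
              exact hmin'' j hj q
          · have hk2 : k'' = 2 * e + 1 := by omega
            rw [hk2] at hocc'' hmin'' hfO''
            rw [Eword_odd e] at hfO''
            apply hardE2 (e := e) hyab ?_ ?_ ?_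
            · intro i
              rw [hocc'' i, Eword_odd e]
              exact ⟨by rintro ⟨j, hj, rfl⟩; exact hj, fun h => ⟨i, h, rfl⟩⟩
            · have h1 := hfO''.1
              omega
            · intro j hj q
              exact hmin'' j hj q
        · -- extension case : c'' = c0 + 1
          obtain ⟨c0, rfl⟩ : ∃ c0, c'' = c0 + 1 := ⟨c'' - 1, by omega⟩
          obtain ⟨j0, hj0, hij⟩ := (hocc'' (i0 + 1)).1 htail0
          have hi0j : i0 = j0 + c0 := by omega
          have hc0len : c0 < (Eword k'').length := by
            have h1 := hfO''.1
            have h2 : 1 ≤ ω''.length := List.length_pos_iff.2 hω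
            omega
          have hlED : ∀ j, dOcc (Eword k'') j →
              D (j + c0) = (Eword k'').getD c0 Letter.a :=
            fun j hj => hj c0 hc0len
          have hyv : (Eword k'').getD c0 Letter.a = y := by
            rw [← hlED j0 hj0, ← hi0j, hy]
          have hoccω : ∀ i, dOcc (y :: ω'') i ↔ ∃ j, dOcc (Eword k'') j ∧ i = j + c0 := by
            intro i
            rw [dOcc_cons]
            constructor
            · rintro ⟨hDi, htail⟩
              obtain ⟨j, hj, hij'⟩ := (hocc'' (i + 1)).1 htail
              exact ⟨j, hj, by omega⟩
            · rintro ⟨j, hj, rfl⟩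
              refine ⟨by rw [hlED j hj]; exact hyv, ?_⟩
              exact (hocc'' _).2 ⟨j, hj, by omega⟩
          refine ⟨k'', c0, hoccω, ?_, ?_⟩
          · intro q
            constructor
            · intro hq
              have := (huniq'' (q + 1)).1 (fOcc_cons_tail hq)
              omega
            · rintro rfl
              refine fOcc_of_dOcc hj0 ((hoccω _).2 ⟨j0, hj0, rfl⟩) ?_
              have h1 := hfO''.1
              simp only [List.length_cons]
              omega
          · intro j hj q hq
            exact hmin'' j hj (q + 1) (fOcc_cons_tail hq)

/-! ### Bridges to the problem's definitions -/

lemma DOccursAt_iff {u : List Letter} {j : ℕ} : DOccursAt u (j + 1) ↔ dOcc u j := by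
  unfold DOccursAt Dseg
  simp only [Nat.add_sub_cancel]
  constructor
  · rintro ⟨-, hseg⟩ l hl
    have hll : l < ((List.range u.length).map fun k => D (j + k)).length := by
      simpa using hl
    have h2 := List.getElem_of_eq hseg hll
    rw [List.getElem_map, List.getElem_range] at h2
    rw [h2, List.getD_eq_getElem _ _ hl]
  · intro h
    refine ⟨by omega, ?_⟩
    apply List.ext_getElem
    · simp
    · intro l h1 h2
      rw [List.getElem_map, List.getElem_range]
      have := h l h2
      rw [List.getD_eq_getElem _ _ h2] at this
      exact this

lemma DOccursAt_iff' {u : List Letter} {i : ℕ} :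
    DOccursAt u i ↔ 1 ≤ i ∧ dOcc u (i - 1) := by
  constructor
  · intro h
    have h1 : 1 ≤ i := h.1
    have h2 : i = (i - 1) + 1 := by omega
    rw [h2] at h
    exact ⟨h1, DOccursAt_iff.1 h⟩
  · rintro ⟨h1, h2⟩
    have h3 : i = (i - 1) + 1 := by omega
    rw [h3]
    exact DOccursAt_iff.2 h2

instance (u : List Letter) : DecidablePred (DOccursAt u) := fun i => by
  unfold DOccursAt
  infer_instance

lemma Eword_infinite (K : ℕ) : {i | DOccursAt (Eword K) i}.Infinite := by
  rcases Nat.even_or_odd K with ⟨e, hk⟩ | ⟨e, hk⟩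
  · have hk2 : K = 2 * e := by omega
    subst hk2
    apply Set.infinite_of_injective_forall_mem
      (f := fun u : ℕ => 2 ^ e * (2 * u) + 1) ?_ ?_
    · intro a b hab
      simp only at hab
      have h1 : (2:ℕ) ^ e * (2 * a) = 2 ^ e * (2 * b) := by omega
      have := Nat.eq_of_mul_eq_mul_left (Nat.two_pow_pos e) h1
      omega
    · intro u
      show DOccursAt (Eword (2 * e)) _
      rw [Eword_even e]
      exact DOccursAt_iff.2 ((occE1 e _).2 ⟨2 * u, R1 u, rfl⟩)
  · have hk2 : K = 2 * e + 1 := by omega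
    subst hk2
    apply Set.infinite_of_injective_forall_mem
      (f := fun u : ℕ => (2 ^ (e + 2) * (2 * u) + 2 ^ (e + 1) + 0 * 2 ^ e) + 1) ?_ ?_
    · intro a b hab
      simp only at hab
      have h1 : (2:ℕ) ^ (e + 2) * (2 * a) = 2 ^ (e + 2) * (2 * b) := by omega
      have := Nat.eq_of_mul_eq_mul_left (Nat.two_pow_pos (e + 2)) h1
      omega
    · intro u
      show DOccursAt (Eword (2 * e + 1)) _
      rw [Eword_odd e]
      exact DOccursAt_iff.2 ((occE2 e _).2 ⟨2 * u, 0, R1 u, by norm_num, rfl⟩)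

lemma nth_shift {S T : ℕ → Prop} [DecidablePred S] [DecidablePred T] {c : ℕ}
    (hinf : (setOf S).Infinite)
    (hT : ∀ i, T i ↔ ∃ j, S j ∧ i = j + c) (n : ℕ) :
    Nat.nth T n = Nat.nth S n + c := by
  have hTlow : ∀ m, m < c → ¬ T m := by
    intro m hm hTm
    obtain ⟨j, -, hj⟩ := (hT m).1 hTm
    omega
  have hcount0 : ∀ m, m ≤ c → Nat.count T m = 0 := by
    intro m hm
    induction m with
    | zero => exact Nat.count_zero T
    | succ m ihm =>
      rw [Nat.count_succ, ihm (by omega), if_neg (hTlow m (by omega))]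
  have hcount : ∀ j, Nat.count T (j + c) = Nat.count S j := by
    intro j
    induction j with
    | zero => rw [Nat.zero_add, hcount0 c le_rfl, Nat.count_zero]
    | succ j ihj =>
      have h1 : j + 1 + c = (j + c) + 1 := by omega
      rw [h1, Nat.count_succ, Nat.count_succ, ihj]
      congr 1
      have : T (j + c) ↔ S j := by
        rw [hT]
        constructor
        · rintro ⟨j', hj', he⟩
          have : j' = j := by omega
          rwa [← this]
        · intro hS
          exact ⟨j, hS, rfl⟩
      by_cases hS : S j
      · rw [if_pos hS, if_pos (this.2 hS)]
      · rw [if_neg hS, if_neg (fun hh => hS (this.1 hh))]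
  have hSn : S (Nat.nth S n) := Nat.nth_mem_of_infinite hinf n
  have hTn : T (Nat.nth S n + c) := (hT _).2 ⟨Nat.nth S n, hSn, rfl⟩
  have hcnt : Nat.count T (Nat.nth S n + c) = n := by
    rw [hcount, Nat.count_nth_of_infinite hinf]
  calc Nat.nth T n = Nat.nth T (Nat.count T (Nat.nth S n + c)) := by rw [hcnt]
  _ = Nat.nth S n + c := Nat.nth_count hTn

end PD

/-- Let ω be a (nonempty) factor of D with Env(ω) = μ₁ ω μ₂ (the
factorization given by the unique occurrence of ω in Env(ω)). Then for every p ≥ 1,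
L(ω,p) = L(Env(ω),p) + |μ₁|, i.e. the p-th occurrence of Env(ω) in D contains the
p-th occurrence of ω with the same offset (Env(ω_p) = Env(ω)_p). -/
theorem strong_envelope_extension (ω : List Letter) (hfac : FactorD ω) (hne : ω ≠ [])
    (μ1 μ2 : List Letter) (hsplit : Env ω = μ1 ++ ω ++ μ2) (p : ℕ) (hp : 1 ≤ p) :
    L ω p = L (Env ω) p + μ1.length := by
  obtain ⟨i, hi⟩ := hfac
  have hfac' : ∃ j, PD.dOcc ω j := ⟨i - 1, (PD.DOccursAt_iff'.1 hi).2⟩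
  obtain ⟨K, c, hocc, huniq, hmin⟩ := PD.MS_main ω.length ω rfl hne hfac'
  have hKmem : IsFactor ω (Eword K) := PD.IsFactor_iff.2 ⟨c, (huniq c).2 rfl⟩
  have hEnv : Env ω = Eword K := by
    unfold Env
    congr 1
    apply le_antisymm
    · exact Nat.sInf_le hKmem
    · apply le_csInf ⟨K, hKmem⟩
      intro b hb
      by_contra hbK
      push_neg at hbK
      obtain ⟨q, hq⟩ := PD.IsFactor_iff.1 hb
      exact hmin b hbK q hq
  have hμ : μ1.length = c := by
    apply (huniq μ1.length).1
    have hmid := PD.fOcc_middle μ1 ω μ2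
    rwa [← hsplit, hEnv] at hmid
  have hT : ∀ i, DOccursAt ω i ↔ ∃ j, DOccursAt (Eword K) j ∧ i = j + c := by
    intro i
    rw [PD.DOccursAt_iff']
    constructor
    · rintro ⟨h1, h2⟩
      obtain ⟨j, hj, he⟩ := (hocc (i - 1)).1 h2
      exact ⟨j + 1, PD.DOccursAt_iff.2 hj, by omega⟩
    · rintro ⟨j, hj, rfl⟩
      have h1 : 1 ≤ j := hj.1
      have h2 := (PD.DOccursAt_iff'.1 hj).2
      refine ⟨by omega, ?_⟩
      apply (hocc _).2
      exact ⟨j - 1, h2, by omega⟩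
  have hinf := PD.Eword_infinite K
  have hnth := PD.nth_shift (S := DOccursAt (Eword K)) (T := DOccursAt ω) (c := c)
    hinf hT (p - 1)
  rw [hEnv]
  unfold L
  rw [hnth, hμ]
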